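/- Let L₀ be a contraction on a Hilbert space H, D* = (I − L₀L₀*)^{1/2}, P the orthogonal projection onto E* = ker L₀. Then for all z, w ∈ 𝔻: P(I − zL₀)⁻¹(I − w̄L₀*)⁻¹P restricted to E* equals (I_{E*} − B(z)B(w)*)/(1 − zw̄), where B(z) = zP(I − zL₀)⁻¹D*. -/

import Mathlib

open ContinuousLinearMap

theorem stmt16 {H : Type*} [NormedAddCommGroup H] [InnerProductSpace ℂ H] [CompleteSpace H]
    (L₀ Dstar P : H →L[ℂ] H) (hL : ‖L₀‖ ≤ 1)
    (hDpos : Dstar.IsPositive)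
    (hDsq : Dstar ∘L Dstar = 1 - L₀ ∘L adjoint L₀)
    (hPsa : IsSelfAdjoint P) (hPidem : P ∘L P = P)
    (hPran : LinearMap.range (P : H →ₗ[ℂ] H) = LinearMap.ker (L₀ : H →ₗ[ℂ] H))
    (z w : ℂ) (hz : ‖z‖ < 1) (hw : ‖w‖ < 1)
    (Rz Rw : H →L[ℂ] H)
    (hRz1 : Rz ∘L (1 - z • L₀) = 1) (hRz2 : (1 - z • L₀) ∘L Rz = 1)
    (hRw1 : Rw ∘L (1 - w • L₀) = 1) (hRw2 : (1 - w • L₀) ∘L Rw = 1) :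
    (1 - z * (starRingEnd ℂ w)) • (P ∘L Rz ∘L adjoint Rw ∘L P) =
      P - (z • (P ∘L Rz ∘L Dstar)) ∘L adjoint (w • (P ∘L Rw ∘L Dstar)) := by
  have hPadj : adjoint P = P := isSelfAdjoint_iff'.mp hPsa
  have hDadj : adjoint Dstar = Dstar := isSelfAdjoint_iff'.mp hDpos.isSelfAdjoint
  have hLP : L₀ ∘L P = 0 := by
    ext x
    have : P x ∈ LinearMap.ker (L₀ : H →ₗ[ℂ] H) := hPran ▸ LinearMap.mem_range_self P.toLinearMap x
    simpa using this
  have hPL : P ∘L adjoint L₀ = 0 := by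
    have := congrArg adjoint hLP
    rw [adjoint_comp, hPadj] at this
    simpa using this
  -- switch to ring notation
  simp only [← mul_def] at *
  have adm : ∀ X Y : H →L[ℂ] H, adjoint (X * Y) = adjoint Y * adjoint X := by
    intro X Y
    rw [← star_eq_adjoint, ← star_eq_adjoint, ← star_eq_adjoint, star_mul]
  have ads : ∀ (c : ℂ) (X : H →L[ℂ] H),
      adjoint (c • X) = (starRingEnd ℂ) c • adjoint X := by
    intro c X
    rw [← star_eq_adjoint, ← star_eq_adjoint, star_smul]
    rfl
  have adone : adjoint (1 : H →L[ℂ] H) = 1 := by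
    rw [← star_eq_adjoint, star_one]
  have adsub : ∀ X Y : H →L[ℂ] H, adjoint (X - Y) = adjoint X - adjoint Y := by
    intro X Y; rw [← star_eq_adjoint, ← star_eq_adjoint, ← star_eq_adjoint, star_sub]
  set c := z * (starRingEnd ℂ) w with hc
  set A := adjoint L₀ with hA
  set Q := adjoint Rw with hQ
  -- basic resolvent identities
  have hRwP : Rw * P = P := by
    have h1 : Rw = 1 + w • (Rw * L₀) := by
      have := hRw1
      rw [mul_sub, mul_one, mul_smul_comm] at this
      linear_combination (norm := noncomm_ring) this
    calc Rw * P = (1 + w • (Rw * L₀)) * P := by rw [← h1]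
    _ = P + w • (Rw * (L₀ * P)) := by noncomm_ring
    _ = P := by rw [hLP]; simp
  have hPQ : P * Q = P := by
    have := congrArg adjoint hRwP
    rw [adm, hPadj, ← hQ] at this
    rw [this]
  have hQid : Q = 1 + (starRingEnd ℂ) w • (A * Q) := by
    have := congrArg adjoint hRw1
    rw [adm, adone, adsub, adone, ads, ← hA, ← hQ] at this
    rw [sub_mul, one_mul, smul_mul_assoc] at this
    linear_combination (norm := noncomm_ring) this
  have hPRz : P * Rz = P + z • (P * Rz * L₀) := by
    have := congrArg (fun X => P * X) hRz1
    simp only [mul_one] at this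
    linear_combination (norm := noncomm_ring) this
  -- key identity
  have hLQP : L₀ * Q * P = (starRingEnd ℂ) w • (L₀ * A * Q * P) := by
    calc L₀ * Q * P = L₀ * (1 + (starRingEnd ℂ) w • (A * Q)) * P := by rw [← hQid]
    _ = L₀ * P + (starRingEnd ℂ) w • (L₀ * A * Q * P) := by noncomm_ring
    _ = _ := by rw [hLP]; simp
  have key : P * Rz * Q * P = P + c • (P * Rz * (L₀ * A * Q * P)) := by
    calc P * Rz * Q * P = (P + z • (P * Rz * L₀)) * Q * P := by rw [← hPRz]
    _ = P * Q * P + z • (P * Rz * (L₀ * Q * P)) := by noncomm_ring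
    _ = P + z • (P * Rz * ((starRingEnd ℂ) w • (L₀ * A * Q * P))) := by
        rw [hPQ, hPidem, hLQP]
    _ = P + c • (P * Rz * (L₀ * A * Q * P)) := by
        rw [mul_smul_comm, smul_smul, ← hc]
  -- now the main goal
  rw [ads, adm, adm, hPadj, hDadj, ← hQ, smul_mul_assoc, mul_smul_comm, smul_smul, ← hc]
  show (1 - c) • (P * Rz * Q * P) = _
  have expand : P * (Rz * Dstar) * (Dstar * Q * P)
      = P * Rz * Q * P - P * Rz * (L₀ * A * Q * P) := by
    have h3 : P * (Rz * Dstar) * (Dstar * Q * P) = P * Rz * (Dstar * Dstar * (Q * P)) := by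
      noncomm_ring
    rw [h3, hDsq]
    noncomm_ring
  rw [expand, key]
  module
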